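/- Let W be a finite-dimensional ℚ-vector space and let Λ, Λ' ⊆ W be finitely generated additive subgroups each of which spans W over ℚ. Set Aut(Λ) = {f ∈ GL(W) | f(Λ) = Λ} and Aut(Λ') = {f ∈ GL(W) | f(Λ') = Λ'}. Then the intersection Aut(Λ) ∩ Aut(Λ') has finite index both in Aut(Λ) and in Aut(Λ'); in particular Aut(Λ) and Aut(Λ') share a common finite-index subgroup. -/

import Mathlib

open scoped Pointwise

private lemma cast_mul_smul {W : Type*} [AddCommGroup W] [Module ℚ W] (a b : ℕ) (x : W) :
    ((a * b : ℕ) : ℚ) • x = b • ((a : ℚ) • x) := by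
  rw [← Nat.cast_smul_eq_nsmul ℚ b, smul_smul, ← Nat.cast_mul, mul_comm]

/-- If `x` is in the `ℚ`-span of a subgroup, some positive multiple of `x` lies in it. -/
private lemma exists_nsmul_mem {W : Type*} [AddCommGroup W] [Module ℚ W]
    (Λ' : AddSubgroup W) {x : W} (hx : x ∈ Submodule.span ℚ (Λ' : Set W)) :
    ∃ n : ℕ, 0 < n ∧ (n : ℚ) • x ∈ Λ' := by
  induction hx using Submodule.span_induction with
  | mem y hy => exact ⟨1, one_pos, by simpa using hy⟩
  | zero => exact ⟨1, one_pos, by simpa using Λ'.zero_mem⟩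
  | add y z _ _ hy hz =>
      obtain ⟨n, hn, hny⟩ := hy
      obtain ⟨m, hm, hmz⟩ := hz
      refine ⟨n * m, Nat.mul_pos hn hm, ?_⟩
      have h1 : ((n * m : ℕ) : ℚ) • (y + z) = m • ((n : ℚ) • y) + n • ((m : ℚ) • z) := by
        rw [smul_add, cast_mul_smul n m y, mul_comm, cast_mul_smul m n z]
      rw [h1]
      exact AddSubgroup.add_mem _ (AddSubgroup.nsmul_mem _ hny m) (AddSubgroup.nsmul_mem _ hmz n)
  | smul q y _ hy =>
      obtain ⟨n, hn, hny⟩ := hy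
      refine ⟨n * q.den, Nat.mul_pos hn q.pos, ?_⟩
      have hden : (q.den : ℚ) ≠ 0 := by
        exact_mod_cast q.pos.ne'
      have hq : (q.den : ℚ) * q = (q.num : ℚ) := by
        have h := Rat.num_div_den q
        rw [div_eq_iff hden] at h
        rw [h, mul_comm]
      have h1 : ((n * q.den : ℕ) : ℚ) • q • y = q.num • ((n : ℚ) • y) := by
        rw [← Int.cast_smul_eq_zsmul ℚ q.num, smul_smul, smul_smul]
        congr 1
        push_cast
        rw [mul_assoc, hq]
        ring
      rw [h1]
      exact AddSubgroup.zsmul_mem _ hny q.num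

/-- If `Λ` is f.g. and `Λ'` spans `W` over `ℚ`, some positive multiple of `Λ` lies in `Λ'`. -/
private lemma exists_nsmul_le {W : Type*} [AddCommGroup W] [Module ℚ W]
    (Λ Λ' : AddSubgroup W) (hfg : Λ.FG)
    (hspan' : Submodule.span ℚ (Λ' : Set W) = ⊤) :
    ∃ n : ℕ, 0 < n ∧ ∀ x ∈ Λ, (n : ℚ) • x ∈ Λ' := by
  obtain ⟨s, hs⟩ := hfg
  choose f hf1 hf2 using fun g : W =>
    exists_nsmul_mem Λ' (x := g) (by rw [hspan']; trivial)
  refine ⟨∏ g ∈ s, f g, Finset.prod_pos fun g _ => hf1 g, ?_⟩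
  set n : ℕ := ∏ g ∈ s, f g with hn
  intro x hx
  have key : Λ ≤ AddSubgroup.comap ((smulAddHom ℚ W) (n : ℚ)) Λ' := by
    rw [← hs, AddSubgroup.closure_le]
    intro g hg
    have hdvd : f g ∣ n := Finset.dvd_prod_of_mem f hg
    obtain ⟨c, hc⟩ := hdvd
    show g ∈ AddSubgroup.comap ((smulAddHom ℚ W) (n : ℚ)) Λ'
    rw [AddSubgroup.mem_comap, smulAddHom_apply, hc, cast_mul_smul]
    exact AddSubgroup.nsmul_mem _ (hf2 g) c
  have := key hx
  rwa [AddSubgroup.mem_comap, smulAddHom_apply] at this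

/-- The set of additive subgroups squeezed between `(k : ℚ) • Λ` and `Λ` is finite,
for `Λ` finitely generated and `k > 0`. -/
private lemma finite_between {W : Type*} [AddCommGroup W] [Module ℚ W]
    (Λ : AddSubgroup W) (hfg : Λ.FG) (k : ℕ) (hk : 0 < k) :
    {T : AddSubgroup W | (∀ x ∈ Λ, (k : ℚ) • x ∈ T) ∧ T ≤ Λ}.Finite := by
  haveI : NeZero k := ⟨hk.ne'⟩
  -- the subgroup of `k`-th multiples inside `Λ`
  set N : AddSubgroup ↥Λ := (smulAddHom ℤ ↥Λ (k : ℤ)).range with hN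
  have hNmem : ∀ x : ↥Λ, k • x ∈ N := by
    intro x
    exact ⟨x, by simp [natCast_zsmul]⟩
  -- the quotient `Λ ⧸ N` is finite
  haveI : Finite (↥Λ ⧸ N) := by
    letI : Module (ZMod k) (↥Λ ⧸ N) := QuotientAddGroup.zmodModule hNmem
    haveI : AddGroup.FG ↥Λ := (AddGroup.fg_iff_addSubgroup_fg Λ).2 hfg
    haveI : AddGroup.FG (↥Λ ⧸ N) :=
      AddGroup.fg_of_surjective (f := QuotientAddGroup.mk' N)
        (QuotientAddGroup.mk'_surjective N)
    obtain ⟨S, hS, hSfin⟩ := AddGroup.fg_iff.mp ‹AddGroup.FG (↥Λ ⧸ N)›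
    haveI : Module.Finite (ZMod k) (↥Λ ⧸ N) := by
      refine ⟨(Submodule.fg_def).2 ⟨S, hSfin, ?_⟩⟩
      rw [eq_top_iff]
      intro x _
      have hx : x ∈ AddSubgroup.closure S := hS ▸ AddSubgroup.mem_top x
      refine AddSubgroup.closure_induction (fun y hy => Submodule.subset_span hy) ?_ ?_ ?_ hx
      · exact Submodule.zero_mem _
      · exact fun a b _ _ ha hb => Submodule.add_mem _ ha hb
      · exact fun a _ ha => Submodule.neg_mem _ ha
    exact @Module.finite_of_finite (ZMod k) (↥Λ ⧸ N) _ _ _ _ ‹_›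
  haveI : Finite (AddSubgroup (↥Λ ⧸ N)) :=
    Finite.of_injective (fun T => (T : Set (↥Λ ⧸ N))) SetLike.coe_injective
  -- inject the set into `AddSubgroup (Λ ⧸ N)`
  apply Set.Finite.of_finite_image (f := fun T =>
    AddSubgroup.map (QuotientAddGroup.mk' N) (T.addSubgroupOf Λ))
  · exact Set.toFinite _
  · rintro T₁ ⟨hT₁, hT₁le⟩ T₂ ⟨hT₂, hT₂le⟩ h
    have h' : AddSubgroup.map (QuotientAddGroup.mk' N) (T₁.addSubgroupOf Λ) =
        AddSubgroup.map (QuotientAddGroup.mk' N) (T₂.addSubgroupOf Λ) := h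
    have hNle : ∀ T : AddSubgroup W, (∀ x ∈ Λ, (k : ℚ) • x ∈ T) → N ≤ T.addSubgroupOf Λ := by
      rintro T hT _ ⟨y, rfl⟩
      have h1 : ((k : ℤ) • y : ↥Λ) ∈ T.addSubgroupOf Λ ↔ (((k : ℤ) • y : ↥Λ) : W) ∈ T :=
        AddSubgroup.mem_addSubgroupOf
      have h2 : (((k : ℤ) • y : ↥Λ) : W) = (k : ℚ) • (y : W) := by
        have hcoe : (((k : ℤ) • y : ↥Λ) : W) = (k : ℤ) • (y : W) := by norm_cast
        rw [hcoe, ← Int.cast_smul_eq_zsmul ℚ]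
        norm_num
      rw [smulAddHom_apply, h1, h2]
      exact hT (y : W) y.2
    have key : ∀ T : AddSubgroup W, N ≤ T.addSubgroupOf Λ →
        AddSubgroup.comap (QuotientAddGroup.mk' N)
          (AddSubgroup.map (QuotientAddGroup.mk' N) (T.addSubgroupOf Λ)) =
        T.addSubgroupOf Λ := by
      intro T hle
      rw [AddSubgroup.comap_map_eq, QuotientAddGroup.ker_mk', sup_of_le_left hle]
    have h2 : T₁.addSubgroupOf Λ = T₂.addSubgroupOf Λ := by
      rw [← key T₁ (hNle T₁ hT₁), ← key T₂ (hNle T₂ hT₂), h']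
    have h3 := congrArg (AddSubgroup.map Λ.subtype) h2
    rwa [AddSubgroup.addSubgroupOf_map_subtype, AddSubgroup.addSubgroupOf_map_subtype,
      inf_of_le_left hT₁le, inf_of_le_left hT₂le] at h3

/-- Half of the statement: the intersection has finite index in the first stabilizer. -/
private lemma half {W : Type*} [AddCommGroup W] [Module ℚ W]
    (Λ Λ' : AddSubgroup W) (hfg : Λ.FG) (hfg' : Λ'.FG)
    (hspan : Submodule.span ℚ (Λ : Set W) = ⊤)
    (hspan' : Submodule.span ℚ (Λ' : Set W) = ⊤) :
    (MulAction.stabilizer (W ≃ₗ[ℚ] W) (Λ : Set W) ⊓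
        MulAction.stabilizer (W ≃ₗ[ℚ] W) (Λ' : Set W)).relIndex
      (MulAction.stabilizer (W ≃ₗ[ℚ] W) (Λ : Set W)) ≠ 0 := by
  classical
  set G := W ≃ₗ[ℚ] W
  set H := MulAction.stabilizer G (Λ : Set W) with hH
  set K := MulAction.stabilizer G (Λ' : Set W) with hK
  obtain ⟨n₁, hn₁, h₁⟩ := exists_nsmul_le Λ Λ' hfg hspan'
  obtain ⟨n₂, hn₂, h₂⟩ := exists_nsmul_le Λ' Λ hfg' hspan
  set m : ℕ := n₁ * n₂ with hm
  have hmpos : 0 < m := Nat.mul_pos hn₁ hn₂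
  have hmQ : (m : ℚ) ≠ 0 := by positivity
  have hΛΛ' : ∀ x ∈ Λ, (m : ℚ) • x ∈ Λ' := by
    intro x hx
    rw [hm, cast_mul_smul]
    exact AddSubgroup.nsmul_mem _ (h₁ x hx) n₂
  have hΛ'Λ : ∀ x ∈ Λ', (m : ℚ) • x ∈ Λ := by
    intro x hx
    rw [hm, mul_comm, cast_mul_smul]
    exact AddSubgroup.nsmul_mem _ (h₂ x hx) n₁
  rw [Subgroup.inf_relIndex_left, Subgroup.relIndex]
  have hstab : K.subgroupOf H = MulAction.stabilizer H (Λ' : Set W) := by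
    ext h
    rw [Subgroup.mem_subgroupOf, MulAction.mem_stabilizer_iff, MulAction.mem_stabilizer_iff,
      Subgroup.smul_def]
  rw [hstab, MulAction.index_stabilizer]
  -- the orbit is finite
  have horb : (MulAction.orbit H (Λ' : Set W)).Finite := by
    have hfin := finite_between Λ hfg (m * m) (Nat.mul_pos hmpos hmpos)
    have hsub : MulAction.orbit H (Λ' : Set W) ⊆
        (fun T : AddSubgroup W => (m : ℚ)⁻¹ • (T : Set W)) ''
          {T : AddSubgroup W | (∀ x ∈ Λ, ((m * m : ℕ) : ℚ) • x ∈ T) ∧ T ≤ Λ} := by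
      rintro S ⟨h, rfl⟩
      have hh : (h : G) • (Λ : Set W) = Λ := h.2
      have hhmem : ∀ x ∈ Λ, (h : G) x ∈ Λ := by
        intro x hx
        have hmem : (h : G) x ∈ (h : G) • (Λ : Set W) :=
          Set.smul_mem_smul_set hx
        rwa [hh] at hmem
      refine ⟨AddSubgroup.map ((m : ℚ) • ((h : G) : W →ₗ[ℚ] W)).toAddMonoidHom Λ', ⟨?_, ?_⟩, ?_⟩
      · -- (m*m) • Λ ⊆ m • h(Λ')
        intro x hx
        have hx' : x ∈ (h : G) • (Λ : Set W) := by rw [hh]; exact hx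
        obtain ⟨z, hz, rfl⟩ := hx'
        refine ⟨(m : ℚ) • z, hΛΛ' z hz, ?_⟩
        show (m : ℚ) • ((h : G) ((m : ℚ) • z)) = ((m * m : ℕ) : ℚ) • ((h : G) • z)
        rw [map_smul, smul_smul, show ((h : G) • z) = (h : G) z from rfl]
        congr 1
        push_cast
        ring
      · -- m • h(Λ') ⊆ Λ
        rintro x ⟨y, hy, rfl⟩
        simp only [LinearMap.toAddMonoidHom_coe, LinearMap.smul_apply, LinearMap.coe_coe]
        rw [← map_smul]
        exact hhmem _ (hΛ'Λ y hy)
      · -- recover the orbit element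
        ext x
        simp only [Set.mem_smul_set_iff_inv_smul_mem₀ (inv_ne_zero hmQ), inv_inv,
          AddSubgroup.coe_map, Set.mem_image, SetLike.mem_coe]
        constructor
        · rintro ⟨y, hy, hxy⟩
          simp only [LinearMap.toAddMonoidHom_coe, LinearMap.smul_apply, LinearMap.coe_coe] at hxy
          exact ⟨y, hy, smul_right_injective W hmQ hxy⟩
        · rintro ⟨y, hy, rfl⟩
          refine ⟨y, hy, ?_⟩
          simp only [LinearMap.toAddMonoidHom_coe, LinearMap.smul_apply, LinearMap.coe_coe]
          rfl
    exact Set.Finite.subset (hfin.image _) hsub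
  have hpos : 0 < (MulAction.orbit H (Λ' : Set W)).ncard := by
    rw [Set.ncard_pos horb]
    exact ⟨Λ', MulAction.mem_orbit_self _⟩
  exact hpos.ne'

/-- Let `W` be a finite-dimensional `ℚ`-vector space and `Λ, Λ' ⊆ W`
lattices (finitely generated additive subgroups spanning `W` over `ℚ`).  Then
`Aut(Λ) ∩ Aut(Λ')` has finite index both in `Aut(Λ) = {f ∈ GL(W) | f(Λ) = Λ}` and in
`Aut(Λ')`; in particular the two groups share a common finite-index subgroup. -/
theorem stmt12 {W : Type*} [AddCommGroup W] [Module ℚ W] [FiniteDimensional ℚ W]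
    (Λ Λ' : AddSubgroup W) (hfg : Λ.FG) (hfg' : Λ'.FG)
    (hspan : Submodule.span ℚ (Λ : Set W) = ⊤)
    (hspan' : Submodule.span ℚ (Λ' : Set W) = ⊤) :
    (MulAction.stabilizer (W ≃ₗ[ℚ] W) (Λ : Set W) ⊓
        MulAction.stabilizer (W ≃ₗ[ℚ] W) (Λ' : Set W)).relIndex
      (MulAction.stabilizer (W ≃ₗ[ℚ] W) (Λ : Set W)) ≠ 0 ∧
    (MulAction.stabilizer (W ≃ₗ[ℚ] W) (Λ : Set W) ⊓
        MulAction.stabilizer (W ≃ₗ[ℚ] W) (Λ' : Set W)).relIndex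
      (MulAction.stabilizer (W ≃ₗ[ℚ] W) (Λ' : Set W)) ≠ 0 := by
  refine ⟨half Λ Λ' hfg hfg' hspan hspan', ?_⟩
  rw [inf_comm]
  exact half Λ' Λ hfg' hfg hspan' hspan
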